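/- Let φ ∈ L¹(0,1) be not almost everywhere zero. Then for every n ∈ ℤ, the set {α ∈ ℝ : D(φ)(α,n) = 0} has Lebesgue measure zero; consequently, for almost every α ∈ ℝ one has D(φ)(α,n) ≠ 0 for all n ∈ ℤ. -/

import Mathlib

open MeasureTheory Real Set

/-- `D(φ)(α,n) = ∫₀¹ e^{(α²+n²π²)(t−1)} φ(t) dt`. -/
noncomputable def Dker (φ : ℝ → ℝ) (α : ℝ) (n : ℤ) : ℝ :=
  ∫ t in Set.Ioo (0:ℝ) 1, Real.exp ((α^2 + (n:ℝ)^2 * Real.pi^2) * (t - 1)) * φ t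

noncomputable def Freal (φ : ℝ → ℝ) (s : ℝ) : ℝ :=
  ∫ t in Set.Ioo (0:ℝ) 1, Real.exp (s * (t - 1)) * φ t

noncomputable def Fc (φ : ℝ → ℝ) (z : ℂ) : ℂ :=
  ∫ t in Set.Ioo (0:ℝ) 1, Complex.exp (z * (↑t - 1)) * (φ t : ℂ)

lemma norm_exp_aux (z : ℂ) {t : ℝ} (ht : t ∈ Set.Ioo (0:ℝ) 1) :
    ‖Complex.exp (z * (↑t - 1))‖ ≤ Real.exp ‖z‖ := by
  rw [Complex.norm_exp]
  apply Real.exp_le_exp.2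
  have h1 : (z * (↑t - 1)).re = z.re * (t - 1) := by
    have : ((t:ℂ) - 1) = ((t - 1 : ℝ) : ℂ) := by push_cast; ring
    rw [this, Complex.mul_re]
    simp
  rw [h1]
  have ht1 : |t - 1| ≤ 1 := abs_le.2 ⟨by linarith [ht.1], by linarith [ht.2]⟩
  calc z.re * (t - 1) ≤ |z.re * (t - 1)| := le_abs_self _
    _ = |z.re| * |t - 1| := abs_mul _ _
    _ ≤ ‖z‖ * 1 := mul_le_mul (Complex.abs_re_le_norm z) ht1 (abs_nonneg _) (norm_nonneg _)
    _ = ‖z‖ := mul_one _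

lemma meas_exp_aux (φ : ℝ → ℝ) (hφ : IntegrableOn φ (Ioo (0:ℝ) 1)) (z : ℂ) :
    AEStronglyMeasurable (fun t : ℝ => Complex.exp (z * (↑t - 1)) * (φ t : ℂ))
      (volume.restrict (Ioo (0:ℝ) 1)) := by
  have h1 : Continuous (fun t : ℝ => Complex.exp (z * (↑t - 1))) :=
    Complex.continuous_exp.comp (continuous_const.mul (Complex.continuous_ofReal.sub continuous_const))
  exact h1.aestronglyMeasurable.mul hφ.ofReal.1

lemma int_exp (φ : ℝ → ℝ) (hφ : IntegrableOn φ (Ioo (0:ℝ) 1)) (z : ℂ) :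
    IntegrableOn (fun t : ℝ => Complex.exp (z * (↑t - 1)) * (φ t : ℂ)) (Ioo (0:ℝ) 1) := by
  apply Integrable.bdd_mul (c := Real.exp ‖z‖) (hφ.ofReal)
  · exact (Complex.continuous_exp.comp
      (continuous_const.mul (Complex.continuous_ofReal.sub continuous_const))).aestronglyMeasurable
  · filter_upwards [ae_restrict_mem measurableSet_Ioo] with t ht
    exact norm_exp_aux z ht

lemma Fc_diff (φ : ℝ → ℝ) (hφ : IntegrableOn φ (Ioo (0:ℝ) 1)) : Differentiable ℂ (Fc φ) := by
  intro z₀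
  have main := hasDerivAt_integral_of_dominated_loc_of_deriv_le
      (F := fun (z : ℂ) (t : ℝ) => Complex.exp (z * (↑t - 1)) * (φ t : ℂ))
      (F' := fun (z : ℂ) (t : ℝ) => Complex.exp (z * (↑t - 1)) * (↑t - 1) * (φ t : ℂ))
      (μ := volume.restrict (Set.Ioo (0:ℝ) 1)) (x₀ := z₀) (s := Metric.ball z₀ 1)
      (bound := fun t => Real.exp (‖z₀‖ + 1) * ‖φ t‖)
      (Metric.ball_mem_nhds z₀ one_pos) ?meas ?int ?meas' ?bnd ?bint ?deriv
  case meas => exact Filter.Eventually.of_forall fun z => meas_exp_aux φ hφ z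
  case int => exact int_exp φ hφ z₀
  case meas' =>
    have h1 : Continuous (fun t : ℝ => Complex.exp (z₀ * (↑t - 1)) * ((t:ℂ) - 1)) :=
      (Complex.continuous_exp.comp
        (continuous_const.mul (Complex.continuous_ofReal.sub continuous_const))).mul
        (Complex.continuous_ofReal.sub continuous_const)
    exact h1.aestronglyMeasurable.mul hφ.ofReal.1
  case bnd =>
    filter_upwards [ae_restrict_mem measurableSet_Ioo] with t ht
    intro z hz
    have hz' : ‖z‖ ≤ ‖z₀‖ + 1 := by
      have h1 : ‖z - z₀‖ < 1 := mem_ball_iff_norm.mp hz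
      calc ‖z‖ = ‖z₀ + (z - z₀)‖ := by ring_nf
        _ ≤ ‖z₀‖ + ‖z - z₀‖ := norm_add_le _ _
        _ ≤ ‖z₀‖ + 1 := by linarith
    have ht1 : ‖(↑t - 1 : ℂ)‖ ≤ 1 := by
      have h2 : ((t:ℂ) - 1) = ((t - 1 : ℝ) : ℂ) := by push_cast; ring
      rw [h2, Complex.norm_real, Real.norm_eq_abs]
      exact abs_le.2 ⟨by linarith [ht.1], by linarith [ht.2]⟩
    calc ‖Complex.exp (z * (↑t - 1)) * (↑t - 1) * (φ t : ℂ)‖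
        = ‖Complex.exp (z * (↑t - 1))‖ * ‖(↑t - 1 : ℂ)‖ * ‖φ t‖ := by
          rw [norm_mul, norm_mul, Complex.norm_real]
      _ ≤ Real.exp ‖z‖ * 1 * ‖φ t‖ := by
          gcongr
          · exact norm_exp_aux z ht
      _ ≤ Real.exp (‖z₀‖ + 1) * ‖φ t‖ := by
          rw [mul_one]; gcongr
  case bint => exact hφ.norm.const_mul _
  case deriv =>
    apply Filter.Eventually.of_forall
    intro t z _
    have h1 : HasDerivAt (fun z : ℂ => z * (↑t - 1)) (↑t - 1) z := hasDerivAt_mul_const _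
    exact h1.cexp.mul_const _
  exact main.2.differentiableAt

lemma Fc_ofReal (φ : ℝ → ℝ) (s : ℝ) :
    Fc φ s = ((∫ t in Set.Ioo (0:ℝ) 1, Real.exp (s * (t - 1)) * φ t : ℝ) : ℂ) := by
  rw [show ((∫ t in Set.Ioo (0:ℝ) 1, Real.exp (s * (t - 1)) * φ t : ℝ) : ℂ)
      = ∫ t in Set.Ioo (0:ℝ) 1, ((Real.exp (s * (t - 1)) * φ t : ℝ) : ℂ) from
    (integral_ofReal (𝕜 := ℂ)).symm]
  apply integral_congr_ae (Filter.Eventually.of_forall fun t => ?_)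
  push_cast [Complex.ofReal_exp]
  ring

lemma phi_ae_zero (φ : ℝ → ℝ) (hφ : IntegrableOn φ (Ioo (0:ℝ) 1))
    (hmom : ∀ k : ℕ, ∫ t in Ioo (0:ℝ) 1, Real.exp (k * t) * φ t = 0) :
    ∀ᵐ t ∂(volume.restrict (Ioo (0:ℝ) 1)), φ t = 0 := by
  set X := Set.Icc (0:ℝ) 1
  set pr : ℝ → X := fun t => Set.projIcc (0:ℝ) 1 zero_le_one t with hpr
  have hint : ∀ g : C(X, ℝ),
      IntegrableOn (fun t => g (pr t) * φ t) (Ioo (0:ℝ) 1) := fun g =>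
    hφ.bdd_mul ((map_continuous g).comp continuous_projIcc).aestronglyMeasurable
      (c := ‖g‖) (Filter.Eventually.of_forall fun t => g.norm_coe_le_norm _)
  set L₀ : C(X, ℝ) →ₗ[ℝ] ℝ :=
    { toFun := fun g => ∫ t in Set.Ioo (0:ℝ) 1, g (pr t) * φ t
      map_add' := fun g₁ g₂ => by
        simp only [ContinuousMap.add_apply]
        rw [← integral_add (hint g₁) (hint g₂)]
        apply integral_congr_ae (Filter.Eventually.of_forall fun t => ?_)
        ring
      map_smul' := fun c g => by
        simp only [ContinuousMap.smul_apply, smul_eq_mul, RingHom.id_apply]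
        rw [← integral_const_mul]
        apply integral_congr_ae (Filter.Eventually.of_forall fun t => ?_)
        ring } with hL₀
  have hbound : ∀ g : C(X, ℝ), ‖L₀ g‖ ≤ (∫ t in Set.Ioo (0:ℝ) 1, ‖φ t‖) * ‖g‖ := by
    intro g
    have h1 : ‖∫ t in Set.Ioo (0:ℝ) 1, g (pr t) * φ t‖
        ≤ ∫ t in Set.Ioo (0:ℝ) 1, ‖g‖ * ‖φ t‖ := by
      apply norm_integral_le_of_norm_le (hφ.norm.const_mul _)
      apply Filter.Eventually.of_forall fun t => ?_
      rw [norm_mul]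
      exact mul_le_mul_of_nonneg_right (g.norm_coe_le_norm _) (norm_nonneg _)
    calc ‖L₀ g‖ ≤ ∫ t in Set.Ioo (0:ℝ) 1, ‖g‖ * ‖φ t‖ := h1
      _ = (∫ t in Set.Ioo (0:ℝ) 1, ‖φ t‖) * ‖g‖ := by rw [integral_const_mul]; ring
  set L : C(X, ℝ) →L[ℝ] ℝ := L₀.mkContinuous _ hbound with hL
  set e : C(X, ℝ) := ⟨fun x => Real.exp x, Real.continuous_exp.comp continuous_subtype_val⟩
    with he
  have hLe : ∀ k : ℕ, L (e ^ k) = 0 := by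
    intro k
    have h1 : L (e ^ k) = ∫ t in Set.Ioo (0:ℝ) 1, (e ^ k) (pr t) * φ t := rfl
    rw [h1]
    have h2 : ∫ t in Set.Ioo (0:ℝ) 1, (e ^ k) (pr t) * φ t
        = ∫ t in Set.Ioo (0:ℝ) 1, Real.exp (k * t) * φ t := by
      apply setIntegral_congr_fun measurableSet_Ioo
      intro t ht
      have hmem : t ∈ X := Ioo_subset_Icc_self ht
      have hprt : ((pr t : X) : ℝ) = t := by
        rw [hpr]; simp only; rw [Set.projIcc_of_mem zero_le_one hmem]
      simp only [ContinuousMap.pow_apply, he, ContinuousMap.coe_mk, hprt]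
      rw [← Real.exp_nat_mul]
    rw [h2]; exact hmom k
  -- L vanishes on the adjoin of e
  have hker : (Algebra.adjoin ℝ ({e} : Set C(X, ℝ)) : Set C(X, ℝ)) ⊆ {g | L g = 0} := by
    intro a ha
    rw [SetLike.mem_coe, Algebra.adjoin_singleton_eq_range_aeval] at ha
    obtain ⟨p, rfl⟩ := ha
    induction p using Polynomial.induction_on' with
    | add p q hp hq =>
        have hp' : L ((Polynomial.aeval e) p) = 0 := hp
        have hq' : L ((Polynomial.aeval e) q) = 0 := hq
        show L ((Polynomial.aeval e) (p + q)) = 0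
        simp only [map_add]
        rw [hp', hq', add_zero]
    | monomial n c =>
        show L ((Polynomial.aeval e) ((Polynomial.monomial n) c)) = 0
        rw [Polynomial.aeval_monomial, ← Algebra.smul_def, _root_.map_smul, hLe n, smul_zero]
  -- separates points, so closure is everything
  have htop : (Algebra.adjoin ℝ ({e} : Set C(X, ℝ))).topologicalClosure = ⊤ := by
    apply ContinuousMap.subalgebra_topologicalClosure_eq_top_of_separatesPoints
    intro x y hxy
    refine ⟨e, ⟨e, Algebra.subset_adjoin rfl, rfl⟩, ?_⟩
    simp only [he, ContinuousMap.coe_mk]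
    exact fun h => hxy (Subtype.ext (Real.exp_injective h))
  have hL0 : ∀ g : C(X, ℝ), L g = 0 := by
    intro g
    have hg : g ∈ closure (Algebra.adjoin ℝ ({e} : Set C(X, ℝ)) : Set C(X, ℝ)) := by
      have : g ∈ (Algebra.adjoin ℝ ({e} : Set C(X, ℝ))).topologicalClosure := by
        rw [htop]; trivial
      exact this
    have hclosed : IsClosed {g : C(X, ℝ) | L g = 0} :=
      isClosed_eq L.continuous continuous_const
    exact closure_minimal hker hclosed hg
  -- every continuous function integrates to zero against φ
  have hcont : ∀ h : ℝ → ℝ, Continuous h → ∫ t in Set.Ioo (0:ℝ) 1, h t * φ t = 0 := by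
    intro h hc
    have h0 := hL0 ⟨fun x : X => h x, hc.comp continuous_subtype_val⟩
    have h2 : ∫ t in Set.Ioo (0:ℝ) 1, h t * φ t
        = L ⟨fun x : X => h x, hc.comp continuous_subtype_val⟩ := by
      show _ = ∫ t in Set.Ioo (0:ℝ) 1, h ((pr t : X) : ℝ) * φ t
      symm
      apply setIntegral_congr_fun measurableSet_Ioo
      intro t ht
      have hprt : ((pr t : X) : ℝ) = t := by
        rw [hpr]; simp only; rw [Set.projIcc_of_mem zero_le_one (Ioo_subset_Icc_self ht)]
      simp only [hprt]
    rw [h2, h0]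
  -- conclude φ = 0 a.e.
  apply ae_eq_zero_of_integral_contDiff_smul_eq_zero (μ := volume.restrict (Ioo (0:ℝ) 1))
    (hφ.locallyIntegrable)
  intro g hg _
  simp only [smul_eq_mul]
  exact hcont g hg.continuous

lemma Freal_analytic (φ : ℝ → ℝ) (hφ : IntegrableOn φ (Ioo (0:ℝ) 1)) (s : ℝ) :
    AnalyticAt ℝ (Freal φ) s := by
  have hFeq : Freal φ = fun s : ℝ => (Fc φ (Complex.ofRealCLM s)).re := by
    funext u
    simp [Freal, Fc_ofReal φ u]
  rw [hFeq]
  have h1 : AnalyticAt ℂ (Fc φ) (Complex.ofRealCLM s) := (Fc_diff φ hφ).analyticAt _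
  have h2 : AnalyticAt ℝ (Fc φ) (Complex.ofRealCLM s) := h1.restrictScalars
  exact (Complex.reCLM.analyticAt _).comp (h2.comp (Complex.ofRealCLM.analyticAt s))

lemma moments_of_F_zero (φ : ℝ → ℝ) (hF : ∀ s : ℝ, Freal φ s = 0) (k : ℕ) :
    ∫ t in Ioo (0:ℝ) 1, Real.exp (k * t) * φ t = 0 := by
  have h1 : ∫ t in Ioo (0:ℝ) 1, Real.exp (k * t) * φ t
      = Real.exp k * Freal φ k := by
    rw [Freal, ← integral_const_mul]
    apply integral_congr_ae (Filter.Eventually.of_forall fun t => ?_)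
    rw [← mul_assoc, ← Real.exp_add]
    ring_nf
  rw [h1, hF, mul_zero]

/-- If `φ ∈ L¹(0,1)` is not a.e. zero, then for each `n ∈ ℤ` the zero set of `α ↦ D(φ)(α,n)`
is Lebesgue-null; consequently, for a.e. `α ∈ ℝ`, `D(φ)(α,n) ≠ 0` for every `n ∈ ℤ`. -/
theorem Dker_ne_zero_ae
    (φ : ℝ → ℝ) (hφ : IntegrableOn φ (Ioo (0:ℝ) 1))
    (hφ0 : ¬ (∀ᵐ t ∂(volume.restrict (Ioo (0:ℝ) 1)), φ t = 0)) :
    (∀ n : ℤ, volume {α : ℝ | Dker φ α n = 0} = 0)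
    ∧ (∀ᵐ α : ℝ, ∀ n : ℤ, Dker φ α n ≠ 0) := by
  have key : ∀ n : ℤ, volume {α : ℝ | Dker φ α n = 0} = 0 := by
    intro n
    by_contra hne
    set c : ℝ := (n:ℝ)^2 * Real.pi^2 with hc
    have hc0 : 0 ≤ c := mul_nonneg (sq_nonneg _) (sq_nonneg _)
    set G : ℝ → ℝ := fun α => Freal φ (α^2 + c) with hG
    have hGanal : ∀ α : ℝ, AnalyticAt ℝ G α := by
      intro α
      exact (Freal_analytic φ hφ _).comp
        ((analyticAt_id.pow 2).add analyticAt_const)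
    have hZeq : {α : ℝ | Dker φ α n = 0} = {α : ℝ | G α = 0} := rfl
    rw [hZeq] at hne
    have hGcont : Continuous G := by
      rw [continuous_iff_continuousAt]; exact fun α => (hGanal α).continuousAt
    have hZclosed : IsClosed {α : ℝ | G α = 0} :=
      isClosed_eq hGcont continuous_const
    have hZunc : ¬ ({α : ℝ | G α = 0}).Countable := fun h => hne (h.measure_zero _)
    obtain ⟨D, hD, ⟨x, hx⟩, hDZ⟩ :=
      exists_perfect_nonempty_of_isClosed_of_not_countable hZclosed hZunc
    have hacc := hD.acc x hx
    rw [accPt_iff_frequently] at hacc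
    have hfreq : ∃ᶠ z in nhdsWithin x {x}ᶜ, G z = 0 := by
      rw [frequently_nhdsWithin_iff]
      exact hacc.mono fun y hy => ⟨hDZ hy.2, hy.1⟩
    have hG0 : EqOn G 0 univ :=
      AnalyticOnNhd.eqOn_zero_of_preconnected_of_frequently_eq_zero
        (fun z _ => hGanal z) isPreconnected_univ (mem_univ x) hfreq
    -- F vanishes on [c, ∞)
    have hFIci : ∀ s : ℝ, c ≤ s → Freal φ s = 0 := by
      intro s hs
      have h1 := hG0 (mem_univ (Real.sqrt (s - c)))
      have h2 : Real.sqrt (s - c) ^ 2 + c = s := by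
        rw [Real.sq_sqrt (sub_nonneg.2 hs)]; ring
      simpa [hG, h2] using h1
    -- F vanishes everywhere by the identity theorem
    have hF0 : ∀ s : ℝ, Freal φ s = 0 := by
      have hev : Freal φ =ᶠ[nhds (c+1)] 0 := by
        filter_upwards [Ici_mem_nhds (lt_add_one c)] with s hs
        exact hFIci s hs
      have := AnalyticOnNhd.eqOn_zero_of_preconnected_of_eventuallyEq_zero
        (fun z _ => Freal_analytic φ hφ z) isPreconnected_univ (mem_univ (c+1)) hev
      exact fun s => this (mem_univ s)
    exact hφ0 (phi_ae_zero φ hφ (moments_of_F_zero φ hF0))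
  refine ⟨key, ?_⟩
  rw [ae_all_iff]
  intro n
  rw [ae_iff]
  simpa using key n
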